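/- Let M = [m_{ij}] be an n×n real Nekrasov matrix with m_{ii} > 0 for all i. Then for every diagonal matrix D = diag(d_1,…,d_n) with 0 ≤ d_i ≤ 1 for all i, the matrix I − D + DM is invertible and ‖(I − D + DM)^{-1}‖_∞ ≤ max_{1 ≤ i ≤ n} η_i(M)/min{m_{ii} − h_i(M), 1}. -/

import Mathlib

open Finset

noncomputable def nekH {n : ℕ} {𝕜 : Type*} [RCLike 𝕜] (A : Matrix (Fin n) (Fin n) 𝕜) : Fin n → ℝ
  | i =>
    (∑ j : Fin n, if h : j < i then ‖A i j‖ / ‖A j j‖ * nekH A j else 0)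
      + ∑ j : Fin n, if i < j then ‖A i j‖ else 0
termination_by i => i.val
decreasing_by exact h

def IsNekrasov {n : ℕ} {𝕜 : Type*} [RCLike 𝕜] (A : Matrix (Fin n) (Fin n) 𝕜) : Prop :=
  ∀ i, nekH A i < ‖A i i‖

noncomputable def nekZ {n : ℕ} {𝕜 : Type*} [RCLike 𝕜] (A : Matrix (Fin n) (Fin n) 𝕜) : Fin n → ℝ
  | i => (∑ j : Fin n, if h : j < i then ‖A i j‖ / ‖A j j‖ * nekZ A j else 0) + 1
termination_by i => i.val
decreasing_by exact h

noncomputable def nekEta {n : ℕ} {𝕜 : Type*} [RCLike 𝕜] (M : Matrix (Fin n) (Fin n) 𝕜) : Fin n → ℝ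
  | i => (∑ j : Fin n, if h : j < i then ‖M i j‖ / min ‖M j j‖ 1 * nekEta M j else 0) + 1
termination_by i => i.val
decreasing_by exact h

noncomputable def linftyNorm {n : ℕ} {𝕜 : Type*} [RCLike 𝕜] (A : Matrix (Fin n) (Fin n) 𝕜) : ℝ :=
  ⨆ i, ∑ j, ‖A i j‖

noncomputable def rPlus {n : ℕ} (M : Matrix (Fin n) (Fin n) ℝ) (i : Fin n) : ℝ :=
  Finset.fold max 0 (fun j => M i j) (Finset.univ.erase i)

noncomputable def BPlus {n : ℕ} (M : Matrix (Fin n) (Fin n) ℝ) : Matrix (Fin n) (Fin n) ℝ :=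
  Matrix.of fun i j => M i j - rPlus M i

def IsBNekrasov {n : ℕ} (M : Matrix (Fin n) (Fin n) ℝ) : Prop :=
  IsNekrasov (BPlus M) ∧ ∀ i, 0 < BPlus M i i

def IsLCPSolution {n : ℕ} (M : Matrix (Fin n) (Fin n) ℝ) (q x : Fin n → ℝ) : Prop :=
  (∀ i, 0 ≤ x i) ∧ (∀ i, 0 ≤ (M.mulVec x + q) i) ∧ ∑ i, (M.mulVec x + q) i * x i = 0

def IsPMatrix {n : ℕ} (M : Matrix (Fin n) (Fin n) ℝ) : Prop :=
  ∀ S : Finset (Fin n), 0 < (M.submatrix (fun i : S => (i : Fin n)) (fun j : S => (j : Fin n))).det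


lemma finStrongInd {n : ℕ} {P : Fin n → Prop}
    (h : ∀ i : Fin n, (∀ j : Fin n, j < i → P j) → P i) : ∀ i, P i := by
  have key : ∀ k : ℕ, ∀ i : Fin n, i.val < k → P i := by
    intro k
    induction k with
    | zero => intro i hi; omega
    | succ k ih =>
      intro i _
      exact h i fun j hj => ih j (by have := Fin.lt_def.mp hj; omega)
  exact fun i => key (i.val + 1) i (Nat.lt_succ_self _)

lemma nekH_nonneg {n : ℕ} (A : Matrix (Fin n) (Fin n) ℝ) : ∀ i, 0 ≤ nekH A i := by
  apply finStrongInd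
  intro i ih
  rw [nekH]
  have h1 : (0:ℝ) ≤ ∑ j : Fin n, if h : j < i then ‖A i j‖ / ‖A j j‖ * nekH A j else 0 := by
    apply Finset.sum_nonneg
    intro j _
    split
    · exact mul_nonneg (div_nonneg (norm_nonneg _) (norm_nonneg _)) (ih j ‹_›)
    · exact le_refl _
  have h2 : (0:ℝ) ≤ ∑ j : Fin n, if i < j then ‖A i j‖ else 0 := by
    apply Finset.sum_nonneg
    intro j _
    split
    · exact norm_nonneg _
    · exact le_refl _
  linarith

lemma one_le_nekZ {n : ℕ} (A : Matrix (Fin n) (Fin n) ℝ) : ∀ i, 1 ≤ nekZ A i := by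
  apply finStrongInd
  intro i ih
  rw [nekZ]
  have h1 : (0:ℝ) ≤ ∑ j : Fin n, if h : j < i then ‖A i j‖ / ‖A j j‖ * nekZ A j else 0 := by
    apply Finset.sum_nonneg
    intro j _
    split
    · exact mul_nonneg (div_nonneg (norm_nonneg _) (norm_nonneg _))
        (le_trans zero_le_one (ih j ‹_›))
    · exact le_refl _
  linarith

lemma key_bound {n : ℕ} (A : Matrix (Fin n) (Fin n) ℝ) (hApos : ∀ j, 0 < A j j)
    (x : Fin n → ℝ) (X Y : ℝ) (hX : ∀ j, |x j| ≤ X) (hY : ∀ j, |A.mulVec x j| ≤ Y) :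
    ∀ i, A i i * |x i| ≤ nekZ A i * Y + nekH A i * X := by
  apply finStrongInd
  intro i ih
  set b : Fin n → ℝ := fun j =>
    (if h : j < i then ‖A i j‖ / ‖A j j‖ * nekZ A j else 0) * Y
      + ((if h : j < i then ‖A i j‖ / ‖A j j‖ * nekH A j else 0)
          + (if i < j then ‖A i j‖ else 0)) * X with hb
  have hsum : A.mulVec x i = A i i * x i + ∑ j : Fin n, (if j = i then 0 else A i j * x j) := by
    rw [Matrix.mulVec, dotProduct]
    calc ∑ j : Fin n, A i j * x j
        = ∑ j : Fin n, ((if j = i then A i j * x j else 0) + (if j = i then 0 else A i j * x j)) := by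
          apply Finset.sum_congr rfl; intro j _; split <;> simp
      _ = (∑ j : Fin n, if j = i then A i j * x j else 0)
            + ∑ j : Fin n, (if j = i then 0 else A i j * x j) := Finset.sum_add_distrib
      _ = A i i * x i + ∑ j : Fin n, (if j = i then 0 else A i j * x j) := by
          congr 1
          simp
  have step1 : A i i * |x i| ≤ Y + ∑ j : Fin n, |if j = i then 0 else A i j * x j| := by
    have e1 : A i i * x i = A.mulVec x i - ∑ j : Fin n, (if j = i then 0 else A i j * x j) := by
      rw [hsum]; ring
    calc A i i * |x i| = |A i i * x i| := by
          rw [abs_mul, abs_of_pos (hApos i)]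
      _ = |A.mulVec x i - ∑ j : Fin n, (if j = i then 0 else A i j * x j)| := by rw [e1]
      _ ≤ |A.mulVec x i| + |∑ j : Fin n, (if j = i then 0 else A i j * x j)| := abs_sub _ _
      _ ≤ Y + ∑ j : Fin n, |if j = i then 0 else A i j * x j| :=
          add_le_add (hY i) (Finset.abs_sum_le_sum_abs _ _)
  have hterm : ∀ j : Fin n, |if j = i then 0 else A i j * x j| ≤ b j := by
    intro j
    rcases lt_trichotomy j i with hj | hj | hj
    · have hne : j ≠ i := ne_of_lt hj
      have hAjj := hApos j
      have h1 : |x j| ≤ (nekZ A j * Y + nekH A j * X) / A j j :=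
        (le_div_iff₀ hAjj).mpr (by rw [mul_comm]; exact ih j hj)
      have : |A i j * x j| ≤ b j := by
        rw [abs_mul, hb]
        simp only [dif_pos hj, if_neg (not_lt_of_gt hj)]
        calc |A i j| * |x j| ≤ |A i j| * ((nekZ A j * Y + nekH A j * X) / A j j) :=
              mul_le_mul_of_nonneg_left h1 (abs_nonneg _)
          _ = ‖A i j‖ / ‖A j j‖ * nekZ A j * Y
              + (‖A i j‖ / ‖A j j‖ * nekH A j + 0) * X := by
              rw [Real.norm_eq_abs, Real.norm_eq_abs, abs_of_pos hAjj]; ring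
      simpa [if_neg hne] using this
    · subst hj
      simp [hb]
    · have hne : j ≠ i := Ne.symm (ne_of_lt hj)
      have : |A i j * x j| ≤ b j := by
        rw [abs_mul, hb]
        simp only [dif_neg (not_lt_of_gt hj), if_pos hj, zero_mul, zero_add, Real.norm_eq_abs]
        linarith [mul_le_mul_of_nonneg_left (hX j) (abs_nonneg (A i j))]
      simpa [if_neg hne] using this
  have hbsum : ∑ j : Fin n, b j
      = (∑ j : Fin n, if h : j < i then ‖A i j‖ / ‖A j j‖ * nekZ A j else 0) * Y
        + ((∑ j : Fin n, if h : j < i then ‖A i j‖ / ‖A j j‖ * nekH A j else 0)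
            + (∑ j : Fin n, if i < j then ‖A i j‖ else 0)) * X := by
    rw [Finset.sum_add_distrib, ← Finset.sum_mul]
    congr 1
    rw [← Finset.sum_mul, Finset.sum_add_distrib]
  have hfin : A i i * |x i| ≤ Y + ∑ j : Fin n, b j :=
    le_trans step1 (add_le_add (le_refl Y) (Finset.sum_le_sum fun j _ => hterm j))
  rw [hbsum] at hfin
  rw [nekZ, nekH]
  linarith

lemma convex_min {d m : ℝ} (hd0 : 0 ≤ d) (hd1 : d ≤ 1) (hm : 0 < m) :
    min m 1 ≤ 1 - d + d * m := by
  rcases le_total m 1 with h | h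
  · rw [min_eq_left h]; nlinarith
  · rw [min_eq_right h]; nlinarith

section comparison

variable {n : ℕ} (M A : Matrix (Fin n) (Fin n) ℝ) (d : Fin n → ℝ)
  (hdiag : ∀ i, 0 < M i i) (hd : ∀ i, 0 ≤ d i ∧ d i ≤ 1)
  (hAd : ∀ i, A i i = 1 - d i + d i * M i i)
  (hAo : ∀ i j, i ≠ j → A i j = d i * M i j)

include hdiag hd hAd

lemma Aii_ge : ∀ i, min (M i i) 1 ≤ A i i := by
  intro i
  rw [hAd i]
  exact convex_min (hd i).1 (hd i).2 (hdiag i)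

lemma Aii_pos : ∀ i, 0 < A i i := fun i =>
  lt_of_lt_of_le (lt_min (hdiag i) one_pos) (Aii_ge M A d hdiag hd hAd i)

include hAo

lemma nekH_A_le : ∀ i, nekH A i ≤ d i * nekH M i := by
  apply finStrongInd
  intro i ih
  conv_lhs => rw [nekH]
  conv_rhs => rw [nekH]
  rw [mul_add, Finset.mul_sum, Finset.mul_sum]
  apply add_le_add
  · apply Finset.sum_le_sum
    intro j _
    by_cases hj : j < i
    · simp only [dif_pos hj]
      have hne : i ≠ j := (ne_of_lt hj).symm
      have hAij : ‖A i j‖ = d i * ‖M i j‖ := by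
        rw [hAo i j hne, Real.norm_eq_abs, Real.norm_eq_abs, abs_mul, abs_of_nonneg (hd i).1]
      have hAjj : ‖A j j‖ = A j j := by
        rw [Real.norm_eq_abs, abs_of_pos (Aii_pos M A d hdiag hd hAd j)]
      have hMjj : ‖M j j‖ = M j j := by
        rw [Real.norm_eq_abs, abs_of_pos (hdiag j)]
      have hApj := Aii_pos M A d hdiag hd hAd j
      have hdd : nekH A j / A j j ≤ nekH M j / M j j := by
        rw [div_le_div_iff₀ hApj (hdiag j), hAd j]
        nlinarith [ih j hj, nekH_nonneg M j, hdiag j, (hd j).1, (hd j).2,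
          mul_le_mul_of_nonneg_right (ih j hj) (le_of_lt (hdiag j)),
          mul_nonneg (sub_nonneg.mpr (hd j).2) (nekH_nonneg M j)]
      have : ‖M i j‖ * (nekH A j / A j j) ≤ ‖M i j‖ * (nekH M j / M j j) :=
        mul_le_mul_of_nonneg_left hdd (norm_nonneg _)
      calc ‖A i j‖ / ‖A j j‖ * nekH A j = d i * (‖M i j‖ * (nekH A j / A j j)) := by
            rw [hAij, hAjj]; ring
        _ ≤ d i * (‖M i j‖ * (nekH M j / M j j)) :=
            mul_le_mul_of_nonneg_left this (hd i).1
        _ = d i * (‖M i j‖ / ‖M j j‖ * nekH M j) := by rw [hMjj]; ring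
    · simp [dif_neg hj]
  · apply Finset.sum_le_sum
    intro j _
    by_cases hj : i < j
    · simp only [if_pos hj]
      have hne : i ≠ j := ne_of_lt hj
      rw [hAo i j hne, Real.norm_eq_abs, Real.norm_eq_abs, abs_mul, abs_of_nonneg (hd i).1]
    · simp [if_neg hj]

lemma nekZ_A_le : ∀ i, nekZ A i ≤ nekEta M i := by
  apply finStrongInd
  intro i ih
  conv_lhs => rw [nekZ]
  conv_rhs => rw [nekEta]
  apply add_le_add _ le_rfl
  apply Finset.sum_le_sum
  intro j _
  by_cases hj : j < i
  · simp only [dif_pos hj]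
    have hne : i ≠ j := (ne_of_lt hj).symm
    have hAij : ‖A i j‖ = d i * ‖M i j‖ := by
      rw [hAo i j hne, Real.norm_eq_abs, Real.norm_eq_abs, abs_mul, abs_of_nonneg (hd i).1]
    have hAij' : ‖A i j‖ ≤ ‖M i j‖ := by
      rw [hAij]
      nlinarith [norm_nonneg (M i j), (hd i).1, (hd i).2]
    have hMjj : ‖M j j‖ = M j j := by
      rw [Real.norm_eq_abs, abs_of_pos (hdiag j)]
    have hminpos : 0 < min ‖M j j‖ 1 := by
      rw [hMjj]; exact lt_min (hdiag j) one_pos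
    have hAjj : min ‖M j j‖ 1 ≤ ‖A j j‖ := by
      rw [hMjj, Real.norm_eq_abs, abs_of_pos (Aii_pos M A d hdiag hd hAd j)]
      exact Aii_ge M A d hdiag hd hAd j
    have hdv : ‖A i j‖ / ‖A j j‖ ≤ ‖M i j‖ / min ‖M j j‖ 1 :=
      div_le_div₀ (norm_nonneg _) hAij' hminpos hAjj
    exact mul_le_mul hdv (ih j hj) (le_trans zero_le_one (one_le_nekZ A j))
      (div_nonneg (norm_nonneg _) hminpos.le)
  · simp [dif_neg hj]

end comparison

theorem stmt9 {n : ℕ} (hn : 0 < n) (M : Matrix (Fin n) (Fin n) ℝ)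
    (hdiag : ∀ i, 0 < M i i) (hNek : IsNekrasov M)
    (d : Fin n → ℝ) (hd : ∀ i, 0 ≤ d i ∧ d i ≤ 1) :
    IsUnit (1 - Matrix.diagonal d + Matrix.diagonal d * M).det ∧
      linftyNorm (1 - Matrix.diagonal d + Matrix.diagonal d * M)⁻¹ ≤
        Finset.univ.sup' ⟨⟨0, hn⟩, Finset.mem_univ _⟩
          (fun i => nekEta M i / min (M i i - nekH M i) 1) := by
  unfold linftyNorm
  have hne : (Finset.univ : Finset (Fin n)).Nonempty := ⟨⟨0, hn⟩, Finset.mem_univ _⟩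
  set A : Matrix (Fin n) (Fin n) ℝ := 1 - Matrix.diagonal d + Matrix.diagonal d * M with hA
  set C : ℝ := Finset.univ.sup' hne (fun i => nekEta M i / min (M i i - nekH M i) 1) with hC
  have hAd : ∀ i, A i i = 1 - d i + d i * M i i := by
    intro i
    simp [hA, Matrix.add_apply, Matrix.sub_apply, Matrix.one_apply_eq,
      Matrix.diagonal_apply_eq, Matrix.diagonal_mul]
  have hAo : ∀ i j, i ≠ j → A i j = d i * M i j := by
    intro i j hij
    simp [hA, Matrix.add_apply, Matrix.sub_apply, Matrix.one_apply_ne hij,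
      Matrix.diagonal_apply_ne _ hij, Matrix.diagonal_mul]
  have hApos := Aii_pos M A d hdiag hd hAd
  have hNekM : ∀ i, nekH M i < M i i := by
    intro i
    have := hNek i
    rwa [Real.norm_eq_abs, abs_of_pos (hdiag i)] at this
  -- main estimate
  have main : ∀ (x : Fin n → ℝ) (Y : ℝ), (∀ j, |A.mulVec x j| ≤ Y) → ∀ i, |x i| ≤ C * Y := by
    intro x Y hY i
    obtain ⟨i0, -, hi0⟩ := Finset.exists_max_image Finset.univ (fun i => |x i|) hne
    have hX : ∀ j, |x j| ≤ |x i0| := fun j => hi0 j (Finset.mem_univ _)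
    have hkey := key_bound A hApos x (|x i0|) Y hX hY i0
    have hμ : min (M i0 i0 - nekH M i0) 1 ≤ A i0 i0 - nekH A i0 := by
      have h1 := nekH_A_le M A d hdiag hd hAd hAo i0
      have h2 : min (M i0 i0 - nekH M i0) 1 ≤ 1 - d i0 + d i0 * (M i0 i0 - nekH M i0) :=
        convex_min (hd i0).1 (hd i0).2 (by linarith [hNekM i0])
      rw [hAd i0]
      nlinarith [h1, h2]
    have hμpos : 0 < min (M i0 i0 - nekH M i0) 1 :=
      lt_min (by linarith [hNekM i0]) one_pos
    have hY0 : 0 ≤ Y := le_trans (abs_nonneg _) (hY i0)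
    have hzη := nekZ_A_le M A d hdiag hd hAd hAo i0
    have hstep : min (M i0 i0 - nekH M i0) 1 * |x i0| ≤ nekEta M i0 * Y := by
      have e1 : (A i0 i0 - nekH A i0) * |x i0| ≤ nekZ A i0 * Y := by nlinarith [hkey]
      have e2 : min (M i0 i0 - nekH M i0) 1 * |x i0| ≤ (A i0 i0 - nekH A i0) * |x i0| :=
        mul_le_mul_of_nonneg_right hμ (abs_nonneg _)
      have e3 : nekZ A i0 * Y ≤ nekEta M i0 * Y := mul_le_mul_of_nonneg_right hzη hY0
      linarith
    have hxle : |x i0| ≤ nekEta M i0 / min (M i0 i0 - nekH M i0) 1 * Y := by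
      rw [div_mul_eq_mul_div, le_div_iff₀ hμpos]
      linarith [hstep]
    have hsup : nekEta M i0 / min (M i0 i0 - nekH M i0) 1 ≤ C := by
      rw [hC]
      exact Finset.le_sup' (fun i => nekEta M i / min (M i i - nekH M i) 1) (Finset.mem_univ i0)
    calc |x i| ≤ |x i0| := hX i
      _ ≤ nekEta M i0 / min (M i0 i0 - nekH M i0) 1 * Y := hxle
      _ ≤ C * Y := mul_le_mul_of_nonneg_right hsup hY0
  -- invertibility
  have hinj : Function.Injective A.mulVec := by
    intro x y hxy
    have hz : A.mulVec (x - y) = 0 := by rw [Matrix.mulVec_sub, hxy, sub_self]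
    have hb : ∀ i, |(x - y) i| ≤ C * 0 := by
      apply main
      intro j
      rw [hz]
      simp
    funext i
    have := hb i
    rw [mul_zero] at this
    have h0 : (x - y) i = 0 := abs_nonpos_iff.mp this
    have : x i - y i = 0 := h0
    linarith
  have hunitA : IsUnit A := Matrix.mulVec_injective_iff_isUnit.mp hinj
  have hdet : IsUnit A.det := (Matrix.isUnit_iff_isUnit_det A).mp hunitA
  refine ⟨hdet, ?_⟩
  have hmulinv : A * A⁻¹ = 1 := Matrix.mul_nonsing_inv A hdet
  have : Nonempty (Fin n) := ⟨⟨0, hn⟩⟩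
  apply ciSup_le
  intro i
  set u : Fin n → ℝ := fun j => if 0 ≤ A⁻¹ i j then 1 else -1 with hu
  set xv : Fin n → ℝ := A⁻¹.mulVec u with hxv
  have hAx : A.mulVec xv = u := by
    rw [hxv, Matrix.mulVec_mulVec, hmulinv, Matrix.one_mulVec]
  have hub : ∀ j, |A.mulVec xv j| ≤ 1 := by
    intro j
    rw [hAx, hu]
    dsimp only
    split <;> simp
  have hxi := main xv 1 hub i
  rw [mul_one] at hxi
  have hsum : ∑ j, ‖A⁻¹ i j‖ = xv i := by
    rw [hxv, Matrix.mulVec, dotProduct]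
    apply Finset.sum_congr rfl
    intro j _
    rw [Real.norm_eq_abs, hu]
    dsimp only
    split
    · rw [mul_one, abs_of_nonneg ‹_›]
    · rw [mul_neg_one, abs_of_neg (lt_of_not_ge ‹_›)]
  rw [hsum]
  exact le_trans (le_abs_self _) hxi
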